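/- In the OPT setup, consider the sparsity pattern S_{X_{W*}} with the matching M_p, and let P be an augmenting path with respect to M_p from an M_p-unmatched row c ∈ X_{W*} \ (I ∪ J) to an M_p-unmatched column u (a sequence c = i_0, c_1, i_1, …, i_{k−1}, c_k = u of distinct rows in X_{W*} and distinct columns with (i_{t−1}, c_t) ∈ S for 1 ≤ t ≤ k and (i_t, c_t) ∈ M_p for 1 ≤ t ≤ k−1). Then for every j ∈ J, no alternating path with respect to M_p starting from j (a sequence j = i'_0, c'_1, i'_1, c'_2, … of distinct rows in X_{W*} and distinct columns with (i'_{t−1}, c'_t) ∈ S \ M_p and (i'_t, c'_t) ∈ M_p for each applicable t) passes through any row or column vertex of P. -/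
import Mathlib


open Matrix MeasureTheory

/-- `A` has sparsity pattern `S`: the nonzero entries of `A` are exactly those indexed by `S`. -/
def HasPattern {m n : ℕ} (S : Finset (Fin m × Fin n)) (A : Matrix (Fin m) (Fin n) ℝ) : Prop :=
  ∀ i j, A i j ≠ 0 ↔ (i, j) ∈ S

/-- Generic rank of the class of matrices with sparsity pattern `S`. -/
noncomputable def sprank {m n : ℕ} (S : Finset (Fin m × Fin n)) : ℕ :=
  sSup {r : ℕ | ∃ A : Matrix (Fin m) (Fin n) ℝ, HasPattern S A ∧ A.rank = r}

/-- The sparsity pattern restricted to the rows in `T` (rows outside `T` become zero). -/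
def patternOn {m n : ℕ} (S : Finset (Fin m × Fin n)) (T : Finset (Fin m)) :
    Finset (Fin m × Fin n) :=
  S.filter (fun p => p.1 ∈ T)

/-- A matching of a sparsity pattern: any two distinct pairs differ in both coordinates. -/
def IsMatching {m n : ℕ} (M : Finset (Fin m × Fin n)) : Prop :=
  ∀ p ∈ M, ∀ q ∈ M, p ≠ q → p.1 ≠ q.1 ∧ p.2 ≠ q.2

/-- `nu S` : maximum cardinality of a matching contained in `S`. -/
noncomputable def nu {m n : ℕ} (S : Finset (Fin m × Fin n)) : ℕ :=
  sSup {k : ℕ | ∃ M ⊆ S, IsMatching M ∧ M.card = k}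

/-- ℓ₀ "norm": number of nonzero entries of a vector. -/
noncomputable def l0 {m : ℕ} (y : Fin m → ℝ) : ℕ :=
  (Finset.univ.filter (fun i => y i ≠ 0)).card

/-- `cospark A` : minimum of `‖A x‖₀` over nonzero `x`. -/
noncomputable def cospark {m n : ℕ} (A : Matrix (Fin m) (Fin n) ℝ) : ℕ :=
  sInf {k : ℕ | ∃ x : Fin n → ℝ, x ≠ 0 ∧ l0 (A.mulVec x) = k}

/-- Generic cospark of the class of matrices with sparsity pattern `S`. -/
noncomputable def spcospark {m n : ℕ} (S : Finset (Fin m × Fin n)) : ℕ :=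
  sSup {k : ℕ | ∃ A : Matrix (Fin m) (Fin n) ℝ, HasPattern S A ∧ cospark A = k}

/-- The row-submatrix `A_T`, realized as `A` with the rows outside `T` zeroed out. -/
noncomputable def rowRestrict {m n : ℕ} (A : Matrix (Fin m) (Fin n) ℝ) (T : Finset (Fin m)) :
    Matrix (Fin m) (Fin n) ℝ :=
  Matrix.of fun i j => if i ∈ T then A i j else 0

/-- `X_W` : the rows of the pattern `S` all of whose nonzero positions lie in the columns `W`. -/
def rowsIn {m n : ℕ} (S : Finset (Fin m × Fin n)) (W : Finset (Fin n)) : Finset (Fin m) :=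
  Finset.univ.filter (fun i => ∀ j, (i, j) ∈ S → j ∈ W)


/-- Subset of a matching is a matching. -/
lemma IsMatching.subset' {m n : ℕ} {M' M : Finset (Fin m × Fin n)} (h : M' ⊆ M)
    (hM : IsMatching M) : IsMatching M' :=
  fun p hp q hq hne => hM p (h hp) q (h hq) hne

/-- Key lemma: an augmenting path for `Mp` from `j` within `X_W` yields a matching of size `n`
in `patternOn S OPT`, contradicting `nu (patternOn S OPT) = n - 1`. -/
lemma key_aug {m n : ℕ} (hn : 1 ≤ n)
    (S : Finset (Fin m × Fin n))
    (OPT : Finset (Fin m)) (hOPT : nu (patternOn S OPT) = n - 1)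
    (M : Finset (Fin m × Fin n)) (hMsub : M ⊆ patternOn S OPT)
    (hM : IsMatching M) (hMcard : M.card = n - 1)
    (I : Finset (Fin m)) (hI : I = M.image Prod.fst)
    (W : Finset (Fin n)) (hW : W = M.image Prod.snd)
    (v : Fin n) (hv : v ∉ W)
    (Mp : Finset (Fin m × Fin n)) (hMp : Mp = M.filter (fun p => p.1 ∈ rowsIn S W))
    (j : Fin m) (hjOPT : j ∈ OPT) (hjI : j ∉ I)
    (K : ℕ) (x : ℕ → Fin m) (y : ℕ → Fin n)
    (hx0 : x 0 = j)
    (hxinj : ∀ i ≤ K, ∀ i' ≤ K, x i = x i' → i = i')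
    (hyinj : ∀ i ≤ K, ∀ i' ≤ K, y i = y i' → i = i')
    (hxX : ∀ i ≤ K, x i ∈ rowsIn S W)
    (hSe : ∀ i ≤ K, (x i, y i) ∈ S)
    (hMpe : ∀ i < K, (x (i+1), y i) ∈ Mp)
    (hlast : ∀ i : Fin m, (i, y K) ∉ Mp) : False := by
  classical
  have hMpsub : Mp ⊆ M := by rw [hMp]; exact Finset.filter_subset _ _
  have hcolEq : ∀ p ∈ M, ∀ q ∈ M, p.2 = q.2 → p = q := by
    intro p hp q hq h; by_contra hne; exact (hM p hp q hq hne).2 h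
  have hrowEq : ∀ p ∈ M, ∀ q ∈ M, p.1 = q.1 → p = q := by
    intro p hp q hq h; by_contra hne; exact (hM p hp q hq hne).1 h
  have hMW : ∀ p ∈ M, p.2 ∈ W := by
    intro p hp; rw [hW]; exact Finset.mem_image_of_mem _ hp
  have hMI : ∀ p ∈ M, p.1 ∈ I := by
    intro p hp; rw [hI]; exact Finset.mem_image_of_mem _ hp
  have hMOPT : ∀ p ∈ M, p.1 ∈ OPT := by
    intro p hp
    have := hMsub hp
    rw [patternOn, Finset.mem_filter] at this
    exact this.2
  have hWmem : ∀ i ≤ K, y i ∈ W := by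
    intro i hi
    have hx := hxX i hi
    rw [rowsIn, Finset.mem_filter] at hx
    exact hx.2 _ (hSe i hi)
  -- the last column and its partner in M
  obtain ⟨p0, hp0M, hp0u⟩ := Finset.mem_image.mp (hW ▸ hWmem K le_rfl)
  set iu := p0.1 with hiu
  have hiuM : (iu, y K) ∈ M := by
    have : p0 = (iu, y K) := by rw [hiu, ← hp0u]
    rwa [← this]
  have hiuI : iu ∈ I := hMI _ hp0M
  have hiuX : iu ∉ rowsIn S W := by
    intro h
    exact hlast iu (by rw [hMp]; exact Finset.mem_filter.mpr ⟨hiuM, h⟩)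
  -- cardinality of W, and the fact that the complement of W is {v}
  have hWcard : W.card = n - 1 := by
    rw [hW, Finset.card_image_of_injOn, hMcard]
    intro p hp q hq h
    exact hcolEq p hp q hq h
  have hWc : ∀ w : Fin n, w ∉ W → w = v := by
    intro w hw
    have h1 : Wᶜ.card = 1 := by
      rw [Finset.card_compl, hWcard]
      simp only [Fintype.card_fin]
      omega
    exact Finset.card_le_one.mp h1.le w (Finset.mem_compl.mpr hw) v (Finset.mem_compl.mpr hv)
  have hiuvS : (iu, v) ∈ S := by
    obtain ⟨w, hwS, hwW⟩ : ∃ w, (iu, w) ∈ S ∧ w ∉ W := by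
      by_contra h
      push_neg at h
      exact hiuX (by rw [rowsIn, Finset.mem_filter]; exact ⟨Finset.mem_univ _, h⟩)
    rwa [hWc w hwW] at hwS
  -- facts about path rows
  have hrowM : ∀ i, i < K → (x (i+1), y i) ∈ M := fun i h => hMpsub (hMpe i h)
  have rowIdent : ∀ p ∈ M, ∀ iN, iN ≤ K → p.1 = x iN →
      ∃ i, i < K ∧ iN = i + 1 ∧ p = (x (i+1), y i) := by
    intro p hp iN hiN hpx
    rcases Nat.eq_zero_or_pos iN with h0 | h1
    · exfalso
      apply hjI
      rw [← hx0, ← h0, ← hpx]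
      exact hMI p hp
    · obtain ⟨i, rfl⟩ : ∃ i, iN = i + 1 := ⟨iN - 1, by omega⟩
      have hiK : i < K := by omega
      exact ⟨i, hiK, rfl, hrowEq p hp _ (hrowM i hiK) hpx⟩
  have colIdent : ∀ p ∈ M, ∀ iN, iN ≤ K → p.2 = y iN →
      (iN < K ∧ p = (x (iN+1), y iN)) ∨ (iN = K ∧ p = (iu, y K)) := by
    intro p hp iN hiN hpy
    rcases Nat.lt_or_ge iN K with h | h
    · exact Or.inl ⟨h, hcolEq p hp _ (hrowM iN h) hpy⟩
    · have : iN = K := by omega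
      subst this
      exact Or.inr ⟨rfl, hcolEq p hp _ hiuM hpy⟩
  have hxOPT : ∀ iN ≤ K, x iN ∈ OPT := by
    intro iN hiN
    rcases Nat.eq_zero_or_pos iN with h0 | h1
    · rw [h0, hx0]; exact hjOPT
    · obtain ⟨i, rfl⟩ : ∃ i, iN = i + 1 := ⟨iN - 1, by omega⟩
      exact hMOPT _ (hrowM i (by omega))
  have hiu_ne_x : ∀ iN ≤ K, iu ≠ x iN := by
    intro iN hiN h
    rcases Nat.eq_zero_or_pos iN with h0 | h1
    · rw [h0, hx0] at h; exact hjI (h ▸ hiuI)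
    · exact hiuX (h ▸ hxX iN hiN)
  have hv_ne_y : ∀ iN ≤ K, v ≠ y iN := by
    intro iN hiN h
    exact hv (h ▸ hWmem iN hiN)
  -- the new matching
  set N : Finset (Fin m × Fin n) :=
    ((Finset.range (K+1)).image (fun i => (x i, y i))) ∪
      (M.filter (fun p => (∀ i ≤ K, p.1 ≠ x i) ∧ p.1 ≠ iu)) ∪ {(iu, v)} with hN
  have hNmem : ∀ p : Fin m × Fin n, p ∈ N ↔
      (∃ i ≤ K, (x i, y i) = p) ∨
      (p ∈ M ∧ (∀ i ≤ K, p.1 ≠ x i) ∧ p.1 ≠ iu) ∨ p = (iu, v) := by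
    intro p
    simp only [hN, Finset.mem_union, Finset.mem_image, Finset.mem_filter, Finset.mem_range,
      Finset.mem_singleton, Nat.lt_succ_iff]
    constructor
    · rintro ((⟨i, hi, he⟩ | h) | h)
      · exact Or.inl ⟨i, hi, he⟩
      · exact Or.inr (Or.inl h)
      · exact Or.inr (Or.inr h)
    · rintro (⟨i, hi, he⟩ | h | h)
      · exact Or.inl (Or.inl ⟨i, hi, he⟩)
      · exact Or.inl (Or.inr h)
      · exact Or.inr h
  have hNmatch : IsMatching N := by
    intro p hp q hq hne
    rw [hNmem] at hp hq
    rcases hp with ⟨i1, hi1, rfl⟩ | ⟨hpM, hpx, hpiu⟩ | rfl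
    · rcases hq with ⟨i2, hi2, rfl⟩ | ⟨hqM, hqx, hqiu⟩ | rfl
      · have hi12 : i1 ≠ i2 := fun h => hne (by rw [h])
        exact ⟨fun h => hi12 (hxinj _ hi1 _ hi2 h), fun h => hi12 (hyinj _ hi1 _ hi2 h)⟩
      · constructor
        · exact fun h => hqx i1 hi1 h.symm
        · intro h
          rcases colIdent q hqM i1 hi1 h.symm with ⟨hlt, hq2⟩ | ⟨_, hq2⟩
          · exact hqx (i1+1) (by omega) (by rw [hq2])
          · exact hqiu (by rw [hq2])
      · exact ⟨fun h => hiu_ne_x i1 hi1 h.symm, fun h => hv_ne_y i1 hi1 h.symm⟩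
    · rcases hq with ⟨i2, hi2, rfl⟩ | ⟨hqM, hqx, hqiu⟩ | rfl
      · constructor
        · exact fun h => hpx i2 hi2 h
        · intro h
          rcases colIdent p hpM i2 hi2 h with ⟨hlt, hp2⟩ | ⟨_, hp2⟩
          · exact hpx (i2+1) (by omega) (by rw [hp2])
          · exact hpiu (by rw [hp2])
      · exact hM p hpM q hqM hne
      · exact ⟨hpiu, fun h => hv ((show p.2 = v from h) ▸ hMW p hpM)⟩
    · rcases hq with ⟨i2, hi2, rfl⟩ | ⟨hqM, hqx, hqiu⟩ | rfl
      · exact ⟨fun h => hiu_ne_x i2 hi2 h, fun h => hv_ne_y i2 hi2 h⟩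
      · exact ⟨fun h => hqiu h.symm, fun h => hv ((show v = q.2 from h).symm ▸ hMW q hqM)⟩
      · exact absurd rfl hne
  have hNsub : N ⊆ patternOn S OPT := by
    intro p hp
    rw [hNmem] at hp
    rw [patternOn, Finset.mem_filter]
    rcases hp with ⟨i1, hi1, rfl⟩ | ⟨hpM, _, _⟩ | rfl
    · exact ⟨hSe i1 hi1, hxOPT i1 hi1⟩
    · have := hMsub hpM
      rwa [patternOn, Finset.mem_filter] at this
    · exact ⟨hiuvS, hMOPT (iu, y K) hiuM⟩
  have hcover : ∀ w : Fin n, w ∈ N.image Prod.snd := by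
    intro w
    by_cases hwW : w ∈ W
    · obtain ⟨p, hpM, hpw⟩ := Finset.mem_image.mp (hW ▸ hwW)
      by_cases hex : ∃ i ≤ K, p.1 = x i
      · obtain ⟨iN, hiN, hpx⟩ := hex
        obtain ⟨i, hiK, _, hpeq⟩ := rowIdent p hpM iN hiN hpx
        refine Finset.mem_image.mpr ⟨(x i, y i), (hNmem _).mpr (Or.inl ⟨i, le_of_lt hiK, rfl⟩), ?_⟩
        rw [← hpw, hpeq]
      · by_cases hpiu : p.1 = iu
        · have hpeq : p = (iu, y K) := hrowEq p hpM _ hiuM hpiu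
          refine Finset.mem_image.mpr ⟨(x K, y K), (hNmem _).mpr (Or.inl ⟨K, le_rfl, rfl⟩), ?_⟩
          rw [← hpw, hpeq]
        · push_neg at hex
          exact Finset.mem_image.mpr ⟨p, (hNmem p).mpr (Or.inr (Or.inl ⟨hpM, hex, hpiu⟩)), hpw⟩
    · refine Finset.mem_image.mpr ⟨(iu, v), (hNmem _).mpr (Or.inr (Or.inr rfl)), ?_⟩
      rw [hWc w hwW]
  have hNcard : n ≤ N.card := by
    calc n = (Finset.univ : Finset (Fin n)).card := by simp
    _ ≤ (N.image Prod.snd).card := Finset.card_le_card (fun w _ => hcover w)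
    _ ≤ N.card := Finset.card_image_le
  have hmem : N.card ∈ {k : ℕ | ∃ M' ⊆ patternOn S OPT, IsMatching M' ∧ M'.card = k} :=
    ⟨N, hNsub, hNmatch, rfl⟩
  have hbdd : BddAbove {k : ℕ | ∃ M' ⊆ patternOn S OPT, IsMatching M' ∧ M'.card = k} := by
    refine ⟨(patternOn S OPT).card, ?_⟩
    rintro k ⟨M', hsub, -, rfl⟩
    exact Finset.card_le_card hsub
  have hle : N.card ≤ nu (patternOn S OPT) := le_csSup hbdd hmem
  rw [hOPT] at hle
  omega

/-- in the OPT setup, with `M_p = {(i,k) ∈ M : i ∈ X_{W*}}`, let `P` be an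
augmenting path w.r.t. `M_p` from an `M_p`-unmatched row `c₀ ∈ X_{W*} \ (I ∪ J)` to an
`M_p`-unmatched column (encoded as in STATEMENT 10 by `rP, cP`).  Then for every `j ∈ J`,
no alternating path w.r.t. `M_p` starting from `j` (rows `r' : Fin a`, columns
`c' : Fin b`, with `a = b` if it ends at a column and `a = b + 1` if it ends at a row;
`r' t = i'_t`, `c' t = c'_{t+1}`) passes through any row or column vertex of `P`. -/
theorem stmt11 {m n : ℕ} (hn : 1 ≤ n) (hmn : n < m) (S : Finset (Fin m × Fin n))
    (hspr : sprank S = n)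
    (OPT : Finset (Fin m)) (hOPT : nu (patternOn S OPT) = n - 1)
    (hmax : ∀ T : Finset (Fin m), nu (patternOn S T) = n - 1 → T.card ≤ OPT.card)
    (M : Finset (Fin m × Fin n)) (hMsub : M ⊆ patternOn S OPT)
    (hM : IsMatching M) (hMcard : M.card = n - 1)
    (I : Finset (Fin m)) (hI : I = M.image Prod.fst)
    (J : Finset (Fin m)) (hJ : J = OPT \ I) (hJne : J.Nonempty)
    (W : Finset (Fin n)) (hW : W = M.image Prod.snd)
    (v : Fin n) (hv : v ∉ W)
    (Mp : Finset (Fin m × Fin n)) (hMp : Mp = M.filter (fun p => p.1 ∈ rowsIn S W))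
    (kP : ℕ) (hkP : 0 < kP) (rP : Fin kP → Fin m) (cP : Fin kP → Fin n)
    (c0 : Fin m) (hc0X : c0 ∈ rowsIn S W) (hc0I : c0 ∉ I) (hc0J : c0 ∉ J)
    (hc0un : ∀ k : Fin n, (c0, k) ∉ Mp)
    (hrP0 : rP ⟨0, hkP⟩ = c0)
    (hrPinj : Function.Injective rP) (hcPinj : Function.Injective cP)
    (hrPX : ∀ t, rP t ∈ rowsIn S W)
    (hPedge : ∀ t, (rP t, cP t) ∈ S)
    (hPmatch : ∀ t : Fin kP, ∀ ht : t.val + 1 < kP, (rP ⟨t.val + 1, ht⟩, cP t) ∈ Mp)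
    (hPlast : ∀ i : Fin m, (i, cP ⟨kP - 1, Nat.sub_lt hkP Nat.one_pos⟩) ∉ Mp) :
    ∀ j ∈ J, ∀ (a b : ℕ) (ha : 0 < a) (r' : Fin a → Fin m) (c' : Fin b → Fin n),
      (a = b ∨ a = b + 1) →
      r' ⟨0, ha⟩ = j →
      Function.Injective r' → Function.Injective c' →
      (∀ t, r' t ∈ rowsIn S W) →
      (∀ t : Fin b, ∀ ht : t.val < a, (r' ⟨t.val, ht⟩, c' t) ∈ S ∧ (r' ⟨t.val, ht⟩, c' t) ∉ Mp) →
      (∀ t : Fin b, ∀ ht : t.val + 1 < a, (r' ⟨t.val + 1, ht⟩, c' t) ∈ Mp) →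
      (∀ t s, r' t ≠ rP s) ∧ (∀ t s, c' t ≠ cP s) := by
  classical
  intro j hj a b ha r' c' hab hr0 hrinj hcinj hrX hQS hQM
  have hjOPT : j ∈ OPT := (Finset.mem_sdiff.mp (hJ ▸ hj)).1
  have hjI : j ∉ I := (Finset.mem_sdiff.mp (hJ ▸ hj)).2
  have hMpsub : Mp ⊆ M := by rw [hMp]; exact Finset.filter_subset _ _
  have hMpmatch : IsMatching Mp := IsMatching.subset' hMpsub hM
  have hIMp : ∀ p ∈ Mp, p.1 ∈ I := fun p hp => by
    rw [hI]; exact Finset.mem_image_of_mem _ (hMpsub hp)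
  by_contra hcon
  rw [not_and_or] at hcon
  have hBadEx : ∃ p : ℕ, (∃ (i : Fin a) (s : Fin kP), r' i = rP s ∧ p = 2 * i.val) ∨
      (∃ (i : Fin b) (s : Fin kP), c' i = cP s ∧ p = 2 * i.val + 1) := by
    rcases hcon with h | h
    · push_neg at h
      obtain ⟨i, s, he⟩ := h
      exact ⟨2 * i.val, Or.inl ⟨i, s, he, rfl⟩⟩
    · push_neg at h
      obtain ⟨i, s, he⟩ := h
      exact ⟨2 * i.val + 1, Or.inr ⟨i, s, he, rfl⟩⟩
  have hspec := Nat.find_spec hBadEx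
  have hmin := fun q (hq : q < Nat.find hBadEx) => Nat.find_min hBadEx hq
  rcases hspec with ⟨i, s, hris, hp⟩ | ⟨i, s, hcis, hp⟩
  · -- minimal bad position is a row of the alternating path on P : contradiction
    rcases Nat.eq_zero_or_pos s.val with hs0 | hs1
    · have hsc0 : rP s = c0 := by
        rw [← hrP0]; exact congrArg rP (Fin.ext (show s.val = 0 from hs0))
      rcases Nat.eq_zero_or_pos i.val with hi0 | hi1
      · have hjc0 : j = c0 := by
          rw [← hr0, ← hsc0, ← hris]
          exact congrArg r' (Fin.ext (show (0:ℕ) = i.val from hi0.symm))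
        have hc0OPT : c0 ∈ OPT := by rw [← hjc0]; exact hjOPT
        exact hc0J (hJ ▸ Finset.mem_sdiff.mpr ⟨hc0OPT, hc0I⟩)
      · have hib : i.val - 1 < b := by rcases hab with h | h <;> omega
        have hmpQ := hQM ⟨i.val - 1, hib⟩ (show i.val - 1 + 1 < a by omega)
        have hmpQ' : (c0, c' ⟨i.val - 1, hib⟩) ∈ Mp := by
          rw [← hsc0, ← hris,
            show r' i = r' ⟨i.val - 1 + 1, show i.val - 1 + 1 < a by omega⟩ from
              congrArg r' (Fin.ext (show i.val = i.val - 1 + 1 by omega))]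
          exact hmpQ
        exact hc0un _ hmpQ'
    · have hmpP := hPmatch ⟨s.val - 1, show s.val - 1 < kP by omega⟩
        (show s.val - 1 + 1 < kP by omega)
      have hmpP' : (rP s, cP ⟨s.val - 1, show s.val - 1 < kP by omega⟩) ∈ Mp := by
        rw [show rP s = rP ⟨s.val - 1 + 1, show s.val - 1 + 1 < kP by omega⟩ from
          congrArg rP (Fin.ext (show s.val = s.val - 1 + 1 by omega))]
        exact hmpP
      rcases Nat.eq_zero_or_pos i.val with hi0 | hi1
      · have hjr : j = rP s := by
          rw [← hr0, ← hris]
          exact congrArg r' (Fin.ext (show (0:ℕ) = i.val from hi0.symm))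
        refine hjI ?_
        rw [hjr]
        exact hIMp _ hmpP'
      · have hib : i.val - 1 < b := by rcases hab with h | h <;> omega
        have hmpQ := hQM ⟨i.val - 1, hib⟩ (show i.val - 1 + 1 < a by omega)
        have hmpQ' : (rP s, c' ⟨i.val - 1, hib⟩) ∈ Mp := by
          rw [← hris,
            show r' i = r' ⟨i.val - 1 + 1, show i.val - 1 + 1 < a by omega⟩ from
              congrArg r' (Fin.ext (show i.val = i.val - 1 + 1 by omega))]
          exact hmpQ
        have hpq : ((rP s, c' ⟨i.val - 1, hib⟩) : Fin m × Fin n)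
            = (rP s, cP ⟨s.val - 1, show s.val - 1 < kP by omega⟩) := by
          by_contra hne
          exact (hMpmatch _ hmpQ' _ hmpP' hne).1 rfl
        exact hmin (2 * (i.val - 1) + 1) (by omega)
          (Or.inr ⟨⟨i.val - 1, hib⟩, ⟨s.val - 1, show s.val - 1 < kP by omega⟩,
            congrArg Prod.snd hpq, rfl⟩)
  · -- minimal bad position is a column : build an augmenting path from j and apply key_aug
    have hia : i.val < a := by rcases hab with h | h <;> omega
    have hibb : i.val < b := i.isLt
    have hss : s.val < kP := s.isLt
    set K := i.val + (kP - 1 - s.val) with hKdef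
    have hminr : ∀ i' : ℕ, i' ≤ i.val → ∀ (h : i' < a) (s' : Fin kP), r' ⟨i', h⟩ ≠ rP s' := by
      intro i' hi' h s' he
      exact hmin (2 * i') (by omega) (Or.inl ⟨⟨i', h⟩, s', he, rfl⟩)
    have hminc : ∀ i' : ℕ, i' < i.val → ∀ (h : i' < b) (s' : Fin kP), c' ⟨i', h⟩ ≠ cP s' := by
      intro i' hi' h s' he
      exact hmin (2 * i' + 1) (by omega) (Or.inr ⟨⟨i', h⟩, s', he, rfl⟩)
    set x : ℕ → Fin m := fun iN =>
      if h : iN ≤ i.val then r' ⟨iN, by omega⟩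
      else if h2 : s.val + iN - i.val < kP then rP ⟨s.val + iN - i.val, h2⟩
      else rP ⟨0, hkP⟩ with hxdef
    set y : ℕ → Fin n := fun iN =>
      if h : iN < i.val then c' ⟨iN, by omega⟩
      else if h2 : s.val + iN - i.val < kP then cP ⟨s.val + iN - i.val, h2⟩
      else cP ⟨0, hkP⟩ with hydef
    have hxlo : ∀ iN (h : iN ≤ i.val), x iN = r' ⟨iN, by omega⟩ := by
      intro iN h
      simp only [hxdef]
      rw [dif_pos h]
    have hxhi : ∀ iN (h1 : i.val < iN) (h2 : iN ≤ K), x iN = rP ⟨s.val + iN - i.val, by omega⟩ := by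
      intro iN h1 h2
      simp only [hxdef]
      rw [dif_neg (by omega), dif_pos (show s.val + iN - i.val < kP by omega)]
    have hylo : ∀ iN (h : iN < i.val), y iN = c' ⟨iN, by omega⟩ := by
      intro iN h
      simp only [hydef]
      rw [dif_pos h]
    have hyhi : ∀ iN (h1 : i.val ≤ iN) (h2 : iN ≤ K), y iN = cP ⟨s.val + iN - i.val, by omega⟩ := by
      intro iN h1 h2
      simp only [hydef]
      rw [dif_neg (by omega), dif_pos (show s.val + iN - i.val < kP by omega)]
    refine key_aug hn S OPT hOPT M hMsub hM hMcard I hI W hW v hv Mp hMp j hjOPT hjI K x y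
      ?_ ?_ ?_ ?_ ?_ ?_ ?_
    · rw [hxlo 0 (Nat.zero_le _)]
      exact hr0
    · -- injectivity of x on [0, K]
      intro iN h iN' h' he
      by_cases c1 : iN ≤ i.val <;> by_cases c2 : iN' ≤ i.val
      · rw [hxlo iN c1, hxlo iN' c2] at he
        exact congrArg Fin.val (hrinj he)
      · rw [hxlo iN c1, hxhi iN' (by omega) h'] at he
        exact absurd he (hminr iN c1 _ _)
      · rw [hxhi iN (by omega) h, hxlo iN' c2] at he
        exact absurd he.symm (hminr iN' c2 _ _)
      · rw [hxhi iN (by omega) h, hxhi iN' (by omega) h'] at he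
        have h3 : s.val + iN - i.val = s.val + iN' - i.val := congrArg Fin.val (hrPinj he)
        omega
    · -- injectivity of y on [0, K]
      intro iN h iN' h' he
      by_cases c1 : iN < i.val <;> by_cases c2 : iN' < i.val
      · rw [hylo iN c1, hylo iN' c2] at he
        exact congrArg Fin.val (hcinj he)
      · rw [hylo iN c1, hyhi iN' (by omega) h'] at he
        exact absurd he (hminc iN c1 _ _)
      · rw [hyhi iN (by omega) h, hylo iN' c2] at he
        exact absurd he.symm (hminc iN' c2 _ _)
      · rw [hyhi iN (by omega) h, hyhi iN' (by omega) h'] at he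
        have h3 : s.val + iN - i.val = s.val + iN' - i.val := congrArg Fin.val (hcPinj he)
        omega
    · -- rows of the path lie in X_W
      intro iN h
      by_cases c : iN ≤ i.val
      · rw [hxlo iN c]; exact hrX _
      · rw [hxhi iN (by omega) h]; exact hrPX _
    · -- edges of the path lie in S
      intro iN h
      rcases Nat.lt_or_ge iN i.val with c | c
      · rw [hxlo iN (le_of_lt c), hylo iN c]
        exact (hQS ⟨iN, by omega⟩ (by omega)).1
      · by_cases ceq : iN = i.val
        · rw [hxlo iN (by omega), hyhi iN (by omega) (by omega)]
          rw [show (⟨s.val + iN - i.val, by omega⟩ : Fin kP) = s from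
            Fin.ext (show s.val + iN - i.val = s.val by omega)]
          rw [← hcis]
          rw [show (⟨iN, by omega⟩ : Fin a) = ⟨i.val, hia⟩ from
            Fin.ext (show iN = i.val from ceq)]
          exact (hQS i hia).1
        · rw [hxhi iN (by omega) h, hyhi iN (by omega) h]
          exact hPedge _
    · -- matched edges of the path
      intro iN h
      rcases Nat.lt_or_ge iN i.val with c | c
      · rw [hxlo (iN + 1) (by omega), hylo iN c]
        exact hQM ⟨iN, by omega⟩ (show iN + 1 < a by omega)
      · rw [hxhi (iN + 1) (by omega) (by omega), hyhi iN (by omega) (by omega)]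
        rw [show (⟨s.val + (iN + 1) - i.val, by omega⟩ : Fin kP)
            = ⟨s.val + iN - i.val + 1, by omega⟩ from
          Fin.ext (show s.val + (iN + 1) - i.val = s.val + iN - i.val + 1 by omega)]
        exact hPmatch ⟨s.val + iN - i.val, by omega⟩
          (show s.val + iN - i.val + 1 < kP by omega)
    · -- the last column is unmatched
      intro iRow
      rw [hyhi K (by omega) le_rfl]
      rw [show (⟨s.val + K - i.val, by omega⟩ : Fin kP)
          = ⟨kP - 1, Nat.sub_lt hkP Nat.one_pos⟩ from
        Fin.ext (show s.val + K - i.val = kP - 1 by omega)]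
      exact hPlast iRow
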